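/- Let I be a nonempty finite index set, let x₀ ∈ ℝⁿ, and let m_i : ℝⁿ → ℝ be differentiable at x₀ with m_i(x₀) > 0 for all i ∈ I. Let g(x) = Σ_{i∈I} m_i(x), α_i = m_i(x₀)/g(x₀), and g̃(x) = Π_{i∈I} (m_i(x)/α_i)^{α_i}. Then g̃ is differentiable at x₀ and its Fréchet derivative at x₀ equals that of g: Dg̃(x₀) = Dg(x₀). -/

import Mathlib

/-- With `g(x) = Σ_{i∈I} m_i(x)`, each `m_i` differentiable at `x₀` with
`m_i(x₀) > 0`, weights `α_i = m_i(x₀)/g(x₀)` and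
`g̃(x) = Π_i (m_i(x)/α_i)^{α_i}`, the function `g̃` is differentiable at `x₀` and its
Fréchet derivative at `x₀` equals that of `g`. -/
theorem stmt_11 {ι : Type*} (n : ℕ) (I : Finset ι) (hI : I.Nonempty)
    (x₀ : Fin n → ℝ) (m : ι → (Fin n → ℝ) → ℝ)
    (hm : ∀ i ∈ I, 0 < m i x₀)
    (hdiff : ∀ i ∈ I, DifferentiableAt ℝ (m i) x₀) :
    DifferentiableAt ℝ (fun x : Fin n → ℝ =>
      ∏ i ∈ I, (m i x / (m i x₀ / ∑ j ∈ I, m j x₀)) ^ (m i x₀ / ∑ j ∈ I, m j x₀)) x₀ ∧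
    fderiv ℝ (fun x : Fin n → ℝ =>
      ∏ i ∈ I, (m i x / (m i x₀ / ∑ j ∈ I, m j x₀)) ^ (m i x₀ / ∑ j ∈ I, m j x₀)) x₀
      = fderiv ℝ (fun x : Fin n → ℝ => ∑ i ∈ I, m i x) x₀ := by
  classical
  set g₀ : ℝ := ∑ j ∈ I, m j x₀ with hg₀def
  have hg₀ : 0 < g₀ := Finset.sum_pos hm hI
  set α : ι → ℝ := fun i => m i x₀ / g₀ with hαdef
  have hα : ∀ i ∈ I, 0 < α i := fun i hi => div_pos (hm i hi) hg₀
  have hαsum : ∑ i ∈ I, α i = 1 := by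
    rw [hαdef]
    rw [← Finset.sum_div]
    exact div_self hg₀.ne'
  -- value of each base at x₀
  have hbase : ∀ i ∈ I, m i x₀ / α i = g₀ := by
    intro i hi
    rw [hαdef]
    field_simp
    exact div_self (hm i hi).ne'
  -- derivative of each factor
  have hfac : ∀ i ∈ I, HasFDerivAt (fun x => (m i x / α i) ^ (α i))
      ((g₀ ^ (α i - 1)) • fderiv ℝ (m i) x₀) x₀ := by
    intro i hi
    have hb : HasFDerivAt (fun x => m i x / α i)
        ((α i)⁻¹ • fderiv ℝ (m i) x₀) x₀ := by
      simpa [div_eq_inv_mul, smul_smul, mul_comm] using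
        ((hdiff i hi).hasFDerivAt.const_mul (α i)⁻¹)
    have h := hb.rpow_const (p := α i) (Or.inl (by rw [hbase i hi]; exact hg₀.ne'))
    have : (α i * (m i x₀ / α i) ^ (α i - 1)) • ((α i)⁻¹ • fderiv ℝ (m i) x₀)
        = (g₀ ^ (α i - 1)) • fderiv ℝ (m i) x₀ := by
      rw [hbase i hi, smul_smul]
      congr 1
      field_simp [(hα i hi).ne']
    rwa [this] at h
  have hprod := HasFDerivAt.finset_prod (u := I) hfac
  -- simplify the derivative of the product
  have hval : ∀ j ∈ I, (m j x₀ / α j) ^ (α j) = g₀ ^ (α j) := by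
    intro j hj; rw [hbase j hj]
  have hDeq : (∑ i ∈ I, (∏ j ∈ I.erase i, (m j x₀ / α j) ^ (α j)) •
        ((g₀ ^ (α i - 1)) • fderiv ℝ (m i) x₀))
      = ∑ i ∈ I, fderiv ℝ (m i) x₀ := by
    refine Finset.sum_congr rfl fun i hi => ?_
    have h1 : (∏ j ∈ I.erase i, (m j x₀ / α j) ^ (α j)) = g₀ ^ (1 - α i) := by
      rw [Finset.prod_congr rfl fun j hj => hval j (Finset.mem_of_mem_erase hj)]
      rw [← Real.rpow_sum_of_pos hg₀]
      congr 1
      have := Finset.add_sum_erase I α hi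
      linarith
    rw [h1, smul_smul, ← Real.rpow_add hg₀]
    norm_num
  rw [hDeq] at hprod
  have hsum : HasFDerivAt (fun x : Fin n → ℝ => ∑ i ∈ I, m i x)
      (∑ i ∈ I, fderiv ℝ (m i) x₀) x₀ :=
    HasFDerivAt.fun_sum fun i hi => (hdiff i hi).hasFDerivAt
  exact ⟨hprod.differentiableAt, by rw [hprod.fderiv, hsum.fderiv]⟩
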